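/- Let B, N > 0 and φ ∈ C([0,T]). With G, G*, H, H* the solution operators as defined, one has H(φ) = G(φ) + N⁻¹(B + N⁻¹) · G(H*(G(φ))) on [0,T]. -/

import Mathlib

set_option maxHeartbeats 1000000

/-- `H(φ) = G(φ) + N⁻¹(B+N⁻¹)·G(H*(G(φ)))` on `[0,T]`.
Here `Hφ = H(φ)` with auxiliary `A = G*(H(φ))`; `Gφ = G(φ)`; `Hs = H*(G(φ))`
with auxiliary `C = G(H*(G(φ)))`. -/
theorem stmt_7 (T B N : ℝ) (hT : 0 < T) (hB : 0 < B) (hN : 0 < N)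
    (φ Hφ Hφ' A A' Gφ Gφ' Hs Hs' C C' : ℝ → ℝ)
    (hφ : ContinuousOn φ (Set.Icc 0 T))
    -- Hφ = H(φ), A = G*(Hφ)
    (hHd : ∀ t ∈ Set.Icc (0:ℝ) T, HasDerivWithinAt Hφ (Hφ' t) (Set.Icc 0 T) t)
    (hHc : ContinuousOn Hφ' (Set.Icc 0 T))
    (hAd : ∀ t ∈ Set.Icc (0:ℝ) T, HasDerivWithinAt A (A' t) (Set.Icc 0 T) t)
    (hAc : ContinuousOn A' (Set.Icc 0 T))
    (hAeq : ∀ t ∈ Set.Icc (0:ℝ) T, -A' t + (B + N⁻¹) * A t = Hφ t)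
    (hAT : A T = 0)
    (hHeq : ∀ t ∈ Set.Icc (0:ℝ) T,
      Hφ' t + (B + N⁻¹) * Hφ t - N⁻¹ * (B + N⁻¹) * A t = φ t)
    (hH0 : Hφ 0 = 0)
    -- Gφ = G(φ)
    (hGd : ∀ t ∈ Set.Icc (0:ℝ) T, HasDerivWithinAt Gφ (Gφ' t) (Set.Icc 0 T) t)
    (hGc : ContinuousOn Gφ' (Set.Icc 0 T))
    (hGeq : ∀ t ∈ Set.Icc (0:ℝ) T, Gφ' t + (B + N⁻¹) * Gφ t = φ t)
    (hG0 : Gφ 0 = 0)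
    -- Hs = H*(Gφ), C = G(Hs) = G(H*(G(φ)))
    (hHsd : ∀ t ∈ Set.Icc (0:ℝ) T, HasDerivWithinAt Hs (Hs' t) (Set.Icc 0 T) t)
    (hHsc : ContinuousOn Hs' (Set.Icc 0 T))
    (hCd : ∀ t ∈ Set.Icc (0:ℝ) T, HasDerivWithinAt C (C' t) (Set.Icc 0 T) t)
    (hCc : ContinuousOn C' (Set.Icc 0 T))
    (hCeq : ∀ t ∈ Set.Icc (0:ℝ) T, C' t + (B + N⁻¹) * C t = Hs t)
    (hC0 : C 0 = 0)
    (hHseq : ∀ t ∈ Set.Icc (0:ℝ) T,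
      -Hs' t + (B + N⁻¹) * Hs t - N⁻¹ * (B + N⁻¹) * C t = Gφ t)
    (hHsT : Hs T = 0) :
    ∀ t ∈ Set.Icc (0:ℝ) T, Hφ t = Gφ t + N⁻¹ * (B + N⁻¹) * C t := by
  have hIcc : (0:ℝ) ∈ Set.Icc (0:ℝ) T := ⟨le_refl 0, hT.le⟩
  have hTIcc : T ∈ Set.Icc (0:ℝ) T := ⟨hT.le, le_refl T⟩
  have haN : (0:ℝ) < N⁻¹ := by positivity
  set a : ℝ := B + N⁻¹ with ha_def
  have ha : 0 < a := by positivity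
  set k : ℝ := N⁻¹ * a with hk_def
  have hk : 0 < k := by positivity
  have hka : k < a ^ 2 := by
    have h1 : N⁻¹ < a := by rw [ha_def]; linarith
    calc k = N⁻¹ * a := rfl
    _ < a * a := mul_lt_mul_of_pos_right h1 ha
    _ = a ^ 2 := by ring
  set D : ℝ → ℝ := fun t => Hφ t - Gφ t - k * C t with hD_def
  set E : ℝ → ℝ := fun t => A t - Hs t with hE_def
  set D' : ℝ → ℝ := fun t => Hφ' t - Gφ' t - k * C' t with hD'_def
  set E' : ℝ → ℝ := fun t => A' t - Hs' t with hE'_def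
  set F : ℝ → ℝ := fun t => D t ^ 2 - k * E t ^ 2 with hF_def
  set F' : ℝ → ℝ := fun t => 2 * D t * D' t - k * (2 * E t * E' t) with hF'_def
  have hDd : ∀ t ∈ Set.Icc (0:ℝ) T, HasDerivWithinAt D (D' t) (Set.Icc 0 T) t :=
    fun t ht => ((hHd t ht).sub (hGd t ht)).sub ((hCd t ht).const_mul k)
  have hEd : ∀ t ∈ Set.Icc (0:ℝ) T, HasDerivWithinAt E (E' t) (Set.Icc 0 T) t :=
    fun t ht => (hAd t ht).sub (hHsd t ht)
  have hFd : ∀ t ∈ Set.Icc (0:ℝ) T, HasDerivWithinAt F (F' t) (Set.Icc 0 T) t := by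
    intro t ht
    have h1 := (hDd t ht).fun_pow 2
    have h2 := ((hEd t ht).fun_pow 2).const_mul k
    have h3 := h1.fun_sub h2
    refine h3.congr_deriv ?_
    push_cast
    ring
  -- D' = k E - a D, E' = a E - D
  have hDeq : ∀ t ∈ Set.Icc (0:ℝ) T, D' t = k * E t - a * D t := by
    intro t ht
    have h1 := hHeq t ht
    have h2 := hGeq t ht
    have h3 := hCeq t ht
    simp only [hD'_def, hD_def, hE_def]
    linear_combination h1 - h2 - k * h3
  have hEeq : ∀ t ∈ Set.Icc (0:ℝ) T, E' t = a * E t - D t := by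
    intro t ht
    have h1 := hAeq t ht
    have h2 := hHseq t ht
    simp only [hE'_def, hD_def, hE_def]
    linear_combination h2 - h1
  -- F' ≤ 0 on Icc
  have hF'le : ∀ t ∈ Set.Icc (0:ℝ) T, F' t ≤ 0 := by
    intro t ht
    have h1 := hDeq t ht
    have h2 := hEeq t ht
    simp only [hF'_def, h1, h2]
    have key : a * (2 * D t * (k * E t - a * D t) - k * (2 * E t * (a * E t - D t))) ≤ a * 0 := by
      nlinarith [sq_nonneg (a * D t - k * E t),
        mul_nonneg (mul_nonneg (sub_nonneg.2 hka.le) hk.le) (sq_nonneg (E t))]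
    exact le_of_mul_le_mul_left key ha
  -- continuity of F
  have hFc : ContinuousOn F (Set.Icc 0 T) := by
    have hDc : ContinuousOn D (Set.Icc 0 T) := fun t ht => (hDd t ht).continuousWithinAt
    have hEc : ContinuousOn E (Set.Icc 0 T) := fun t ht => (hEd t ht).continuousWithinAt
    exact (hDc.pow 2).sub (continuousOn_const.mul (hEc.pow 2))
  -- F is antitone on Icc
  have hanti : AntitoneOn F (Set.Icc 0 T) := by
    apply antitoneOn_of_deriv_nonpos (convex_Icc 0 T) hFc
    · intro x hx
      rw [interior_Icc] at hx
      exact ((hFd x (Set.Ioo_subset_Icc_self hx)).hasDerivAt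
        (Icc_mem_nhds hx.1 hx.2)).differentiableAt.differentiableWithinAt
    · intro x hx
      rw [interior_Icc] at hx
      have hd := ((hFd x (Set.Ioo_subset_Icc_self hx)).hasDerivAt
        (Icc_mem_nhds hx.1 hx.2)).deriv
      rw [hd]
      exact hF'le x (Set.Ioo_subset_Icc_self hx)
  -- endpoint values
  have hD0 : D 0 = 0 := by simp [hD_def, hH0, hG0, hC0]
  have hET : E T = 0 := by simp [hE_def, hAT, hHsT]
  have hF0 : F 0 ≤ 0 := by
    simp only [hF_def, hD0]
    nlinarith [sq_nonneg (E 0), hk]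
  have hFT : 0 ≤ F T := by
    simp only [hF_def, hET]
    nlinarith [sq_nonneg (D T)]
  have hFT0 : F T ≤ F 0 := hanti hIcc hTIcc hT.le
  -- F ≡ 0 on Icc
  have hFzero : ∀ t ∈ Set.Icc (0:ℝ) T, F t = 0 := by
    intro t ht
    have h1 : F t ≤ F 0 := hanti hIcc ht ht.1
    have h2 : F T ≤ F t := hanti ht hTIcc ht.2
    linarith
  -- hence F' ≡ 0 on Icc
  have hF'zero : ∀ t ∈ Set.Icc (0:ℝ) T, F' t = 0 := by
    intro t ht
    have hzero : HasDerivWithinAt F 0 (Set.Icc 0 T) t :=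
      (hasDerivWithinAt_const t (Set.Icc (0:ℝ) T) (0:ℝ)).congr
        (fun y hy => hFzero y hy) (hFzero t ht)
    have hu := (uniqueDiffOn_Icc hT) t ht
    have hderiv := (hFd t ht).derivWithin hu
    rw [← hderiv, hzero.derivWithin hu]
  -- conclude D t = 0
  intro t ht
  have h0 := hF'zero t ht
  have h1 := hDeq t ht
  have h2 := hEeq t ht
  simp only [hF'_def, h1, h2] at h0
  have hE2 : E t ^ 2 ≤ 0 := by
    nlinarith [h0, sq_nonneg (a * D t - k * E t), mul_pos (sub_pos.2 hka) hk]
  have hE0 : E t = 0 := by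
    have := sq_nonneg (E t)
    have h3 : E t ^ 2 = 0 := le_antisymm hE2 this
    exact pow_eq_zero_iff two_ne_zero |>.mp h3
  have hFt := hFzero t ht
  simp only [hF_def, hE0] at hFt
  have hD2 : D t ^ 2 = 0 := by linarith [sq_nonneg (D t), hFt]
  have hDt : D t = 0 := pow_eq_zero_iff two_ne_zero |>.mp hD2
  simp only [hD_def] at hDt
  linarith
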